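/- arXiv:1902.07035 — 4 statements merged into one kernel-verified Lean document; each statement's English description precedes it below -/
import Mathlib

section
/- Let N ≥ 1, 0 < s < 1 and C₁ > 0. Then there do NOT exist constants C > 0 and b > 0 such that for all x, y ∈ ℝ^N and all t > 0, C₁ t^{-N/(2s)} (1 + |x-y| t^{-1/(2s)})^{-(N+2s)} ≤ C (4π t)^{-N/2} e^{-|x-y|²/(4bt)}. Equivalently: for every C > 0 and b > 0 there exist t > 0 and x, y ∈ ℝ^N with C₁ t^{-N/(2s)} (1 + |x-y| t^{-1/(2s)})^{-(N+2s)} > C (4π t)^{-N/2} e^{-|x-y|²/(4bt)}. -/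
open MeasureTheory Real Filter

/-- The fractional heat kernel lower bound is not compatible with a Gaussian upper bound:
for `N ≥ 1`, `0 < s < 1` and `C₁ > 0`, there are no constants `C > 0` and `b > 0` such that
`C₁ t^{-N/(2s)} (1 + |x-y| t^{-1/(2s)})^{-(N+2s)} ≤ C (4πt)^{-N/2} e^{-|x-y|²/(4bt)}`
for all `x, y ∈ ℝ^N` and all `t > 0`. -/
theorem no_gaussian_estimate_for_fractional_kernel (N : ℕ) (hN : 1 ≤ N)
    (s C₁ : ℝ) (hs0 : 0 < s) (hs1 : s < 1) (hC₁ : 0 < C₁) :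
    ¬ ∃ (C b : ℝ), 0 < C ∧ 0 < b ∧
      ∀ (x y : EuclideanSpace ℝ (Fin N)) (t : ℝ), 0 < t →
        C₁ * t ^ (-((N : ℝ) / (2 * s))) *
            (1 + ‖x - y‖ * t ^ (-(1 / (2 * s)))) ^ (-((N : ℝ) + 2 * s)) ≤
          C * (4 * Real.pi * t) ^ (-(N : ℝ) / 2) *
            Real.exp (-‖x - y‖ ^ 2 / (4 * b * t)) := by
  rintro ⟨C, b, hC, hb, h⟩
  set p : ℝ := (N : ℝ) + 2 * s with hp
  have hp0 : 0 < p := by positivity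
  -- specialize at x = r • e₀, y = 0, t = 1
  have key : ∀ r : ℝ, 0 ≤ r →
      C₁ ≤ C * (4 * Real.pi) ^ (-(N : ℝ) / 2) * ((1 + r) ^ p * Real.exp (-(1 / (4 * b)) * r ^ 2)) := by
    intro r hr
    have hx : ‖(EuclideanSpace.single (⟨0, hN⟩ : Fin N) r : EuclideanSpace ℝ (Fin N)) - 0‖ = r := by
      simp [EuclideanSpace.norm_single, abs_of_nonneg hr]
    have := h (EuclideanSpace.single (⟨0, hN⟩ : Fin N) r) 0 1 one_pos
    rw [hx] at this
    simp only [Real.one_rpow, mul_one] at this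
    have h1r : (0:ℝ) < 1 + r := by linarith
    have hrw : (1 + r) ^ (-p) = ((1 + r) ^ p)⁻¹ := Real.rpow_neg h1r.le p
    rw [hrw] at this
    have hpow : (0:ℝ) < (1 + r) ^ p := Real.rpow_pos_of_pos h1r p
    have h2 : C₁ ≤ C * (4 * Real.pi) ^ (-(N : ℝ) / 2) * Real.exp (-r ^ 2 / (4 * b)) * ((1 + r) ^ p) := by
      calc C₁ = C₁ * ((1 + r) ^ p)⁻¹ * ((1 + r) ^ p) := by
              field_simp
        _ ≤ _ := by
              exact mul_le_mul_of_nonneg_right this hpow.le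
    calc C₁ ≤ C * (4 * Real.pi) ^ (-(N : ℝ) / 2) * Real.exp (-r ^ 2 / (4 * b)) * ((1 + r) ^ p) := h2
      _ = C * (4 * Real.pi) ^ (-(N : ℝ) / 2) * ((1 + r) ^ p * Real.exp (-(1 / (4 * b)) * r ^ 2)) := by
          rw [show -r ^ 2 / (4 * b) = -(1 / (4 * b)) * r ^ 2 by ring]
          ring
  -- the RHS tends to 0
  have hc : (0:ℝ) < 1 / (4 * b) := by positivity
  have htend : Tendsto (fun r : ℝ => (1 + r) ^ p * Real.exp (-(1 / (4 * b)) * r ^ 2)) atTop (nhds 0) := by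
    have h1 : Tendsto (fun u : ℝ => u ^ p * Real.exp (-(1 / (4 * b)) * u)) atTop (nhds 0) :=
      tendsto_rpow_mul_exp_neg_mul_atTop_nhds_zero p (1 / (4 * b)) hc
    have h2 : Tendsto (fun r : ℝ => r ^ 2) atTop atTop :=
      tendsto_pow_atTop (by norm_num)
    have h3 := (h1.comp h2).const_mul ((2:ℝ) ^ p)
    rw [mul_zero] at h3
    apply squeeze_zero_norm' _ h3
    filter_upwards [eventually_ge_atTop (1:ℝ)] with r hr
    have h1r : (0:ℝ) < 1 + r := by linarith
    have hbound : (1 + r) ^ p ≤ 2 ^ p * (r ^ 2) ^ p := by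
      rw [← Real.mul_rpow (by norm_num) (by positivity)]
      apply Real.rpow_le_rpow h1r.le (by nlinarith) hp0.le
    rw [Real.norm_of_nonneg (by positivity)]
    simp only [Function.comp]
    calc (1 + r) ^ p * Real.exp (-(1 / (4 * b)) * r ^ 2)
        ≤ 2 ^ p * (r ^ 2) ^ p * Real.exp (-(1 / (4 * b)) * r ^ 2) :=
          mul_le_mul_of_nonneg_right hbound (Real.exp_pos _).le
      _ = 2 ^ p * ((r ^ 2) ^ p * Real.exp (-(1 / (4 * b)) * r ^ 2)) := by ring
  have htend2 := htend.const_mul (C * (4 * Real.pi) ^ (-(N : ℝ) / 2))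
  rw [mul_zero] at htend2
  have : C₁ ≤ 0 := by
    apply ge_of_tendsto htend2
    filter_upwards [eventually_ge_atTop (0:ℝ)] with r hr using key r hr
  linarith
end

section
/- Let (X, μ) be a measure space and let T, S : [0,∞) → ℒ(L²(X,μ;ℝ)) be two families of bounded linear operators on real L²(X,μ) satisfying the semigroup laws T(t+τ) = T(t)∘T(τ) and S(t+τ) = S(t)∘S(τ) for all t, τ ≥ 0, with S(0) the identity. Assume S is positivity preserving: if f ≥ 0 a.e. then S(t)f ≥ 0 a.e. for every t ≥ 0. Let M ≥ 1 and b > 0, and assume the domination |T(t)f| ≤ M · S(bt)|f| a.e., for all 0 ≤ t ≤ 1 and all f ∈ L²(X,μ). Then for every t ≥ 0 and every f ∈ L²(X,μ), |T(t)f| ≤ M e^{ω t} S(bt)|f| a.e., where ω := log M. -/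
open MeasureTheory

/-- Extension of a domination estimate from `0 ≤ t ≤ 1` to all `t ≥ 0`: if `T`, `S` are
semigroups of bounded operators on real `L²(X,μ)`, `S` is positivity preserving, and
`|T(t)f| ≤ M · S(bt)|f|` for `0 ≤ t ≤ 1`, then
`|T(t)f| ≤ M e^{ωt} S(bt)|f|` for all `t ≥ 0`, where `ω = log M`. -/
theorem domination_extends_to_all_times {X : Type*} [MeasurableSpace X] (μ : Measure X)
    (T S : ℝ → Lp ℝ 2 μ →L[ℝ] Lp ℝ 2 μ)
    (hTsg : ∀ t τ : ℝ, 0 ≤ t → 0 ≤ τ → T (t + τ) = (T t).comp (T τ))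
    (hSsg : ∀ t τ : ℝ, 0 ≤ t → 0 ≤ τ → S (t + τ) = (S t).comp (S τ))
    (hS0 : S 0 = ContinuousLinearMap.id ℝ (Lp ℝ 2 μ))
    (hSpos : ∀ t : ℝ, 0 ≤ t → ∀ f : Lp ℝ 2 μ, 0 ≤ f → 0 ≤ S t f)
    (M b : ℝ) (hM : 1 ≤ M) (hb : 0 < b)
    (hdom : ∀ t : ℝ, 0 ≤ t → t ≤ 1 → ∀ f : Lp ℝ 2 μ, |T t f| ≤ M • S (b * t) |f|)
    (t : ℝ) (ht : 0 ≤ t) (f : Lp ℝ 2 μ) :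
    |T t f| ≤ (M * Real.exp (Real.log M * t)) • S (b * t) |f| := by
  have hM0 : (0:ℝ) ≤ M := le_trans zero_le_one hM
  have hsmulpos : ∀ c : ℝ, 0 ≤ c → ∀ g : Lp ℝ 2 μ, 0 ≤ g → 0 ≤ c • g := by
    intro c hc g hg
    rw [← Lp.coeFn_nonneg] at hg ⊢
    filter_upwards [hg, Lp.coeFn_smul c g] with x hx hx'
    rw [hx']
    exact mul_nonneg hc hx
  have smul_mono_r : ∀ c c' : ℝ, c ≤ c' → ∀ g : Lp ℝ 2 μ, 0 ≤ g → c • g ≤ c' • g := by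
    intro c c' hcc g hg
    have := hsmulpos (c' - c) (by linarith) g hg
    rw [sub_smul] at this
    exact sub_nonneg.mp this
  have smul_mono_l : ∀ c : ℝ, 0 ≤ c → ∀ g h : Lp ℝ 2 μ, g ≤ h → c • g ≤ c • h := by
    intro c hc g h hgh
    have := hsmulpos c hc (h - g) (sub_nonneg.mpr hgh)
    rw [smul_sub] at this
    exact sub_nonneg.mp this
  -- monotonicity of S
  have Smono : ∀ τ : ℝ, 0 ≤ τ → ∀ g h : Lp ℝ 2 μ, g ≤ h → S τ g ≤ S τ h := by
    intro τ hτ g h hgh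
    have := hSpos τ hτ (h - g) (sub_nonneg.mpr hgh)
    rw [map_sub] at this
    exact sub_nonneg.mp this
  -- key induction
  have key : ∀ n : ℕ, ∀ s : ℝ, 0 ≤ s → s ≤ n + 1 → ∀ g : Lp ℝ 2 μ,
      |T s g| ≤ (M ^ (n + 1)) • S (b * s) |g| := by
    intro n
    induction n with
    | zero =>
      intro s hs hs1 g
      simpa using hdom s hs (by simpa using hs1) g
    | succ n ih =>
      intro s hs hs1 g
      by_cases hcase : s ≤ n + 1
      · refine le_trans (ih s hs hcase g) ?_
        have hSg : (0:Lp ℝ 2 μ) ≤ S (b * s) |g| :=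
          hSpos _ (mul_nonneg hb.le hs) _ (abs_nonneg g)
        exact smul_mono_r _ _ (pow_le_pow_right₀ hM (Nat.le_succ _)) _ hSg
      · push_neg at hcase
        have h1s : (1:ℝ) ≤ s := by
          have : (0:ℝ) ≤ (n:ℝ) := Nat.cast_nonneg n
          linarith
        have hs1' : 0 ≤ s - 1 := by linarith
        have hsplit : s = 1 + (s - 1) := by ring
        have hT : T s g = T 1 (T (s - 1) g) := by
          conv_lhs => rw [hsplit, hTsg 1 (s - 1) zero_le_one hs1']
          rfl
        have step1 : |T s g| ≤ M • S (b * 1) |T (s - 1) g| := by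
          rw [hT]; exact hdom 1 zero_le_one le_rfl _
        have step2 : |T (s - 1) g| ≤ (M ^ (n + 1)) • S (b * (s - 1)) |g| :=
          ih (s - 1) hs1' (by push_cast; push_cast at hs1; linarith) g
        have step3 : S (b * 1) |T (s - 1) g|
            ≤ (M ^ (n + 1)) • S (b * s) |g| := by
          refine le_trans (Smono (b * 1) (by positivity) _ _ step2) ?_
          rw [_root_.map_smul]
          have hcomp : S (b * 1) (S (b * (s - 1)) |g|) = S (b * s) |g| := by
            have := hSsg (b * 1) (b * (s - 1)) (by positivity)
              (mul_nonneg hb.le hs1')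
            have harg : b * 1 + b * (s - 1) = b * s := by ring
            rw [harg] at this
            rw [this]; rfl
          rw [hcomp]
        calc |T s g| ≤ M • S (b * 1) |T (s - 1) g| := step1
          _ ≤ M • ((M ^ (n + 1)) • S (b * s) |g|) :=
            smul_mono_l M hM0 _ _ step3
          _ = (M ^ (n + 1 + 1)) • S (b * s) |g| := by
            rw [smul_smul]; ring_nf
  -- conclude
  set n := ⌊t⌋₊ with hn
  have htn : t ≤ n + 1 := (Nat.lt_floor_add_one t).le
  refine le_trans (key n t ht htn f) ?_
  have hSf : (0:Lp ℝ 2 μ) ≤ S (b * t) |f| :=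
    hSpos _ (mul_nonneg hb.le ht) _ (abs_nonneg f)
  refine smul_mono_r _ _ ?_ _ hSf
  have hMpos : (0:ℝ) < M := lt_of_lt_of_le zero_lt_one hM
  have : M ^ (n + 1) = M * M ^ n := by ring
  rw [this]
  refine mul_le_mul_of_nonneg_left ?_ hM0
  calc M ^ n = Real.exp (Real.log M * n) := by
        rw [mul_comm, Real.exp_nat_mul, Real.exp_log hMpos]
    _ ≤ Real.exp (Real.log M * t) := by
        apply Real.exp_le_exp.mpr
        exact mul_le_mul_of_nonneg_left (Nat.floor_le ht) (Real.log_nonneg hM)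
end

section
/- Let N ≥ 1, 0 < s < 1, let Ω ⊆ ℝ^N, let 0 < θ₂ < π/2, and let b, C > 0. Let K : Σ(θ₂) × Ω × Ω → ℂ be such that for all x, y ∈ Ω the map z ↦ K(z,x,y) is holomorphic on the sector Σ(θ₂), and assume: (1) |K(z,x,y)| ≤ C (Re z)^{-N/(2s)} for all x, y ∈ Ω and all z ∈ Σ(θ₂); and (2) |K(t,x,y)| ≤ C t^{-N/(2s)} (1 + |x-y| (bt)^{-1/(2s)})^{-(N+2s)} for all x, y ∈ Ω and all real t > 0. Then for every ε ∈ (0,1] and every θ₁ ∈ (0, ε θ₂) there is a constant C' > 0 such that |K(z,x,y)| ≤ C' (Re z)^{-N/(2s)} (1 + |x-y| (b|z|)^{-1/(2s)})^{-(N+2s)(1-ε)} for all x, y ∈ Ω and all z ∈ Σ(θ₁). -/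
open MeasureTheory Real

private lemma aux_abs_exp_mul_log (a : ℝ) (w : ℂ) (hw : w ≠ 0) :
    ‖Complex.exp ((a : ℂ) * Complex.log w)‖ = ‖w‖ ^ a := by
  rw [Complex.norm_exp]
  have h1 : ((a : ℂ) * Complex.log w).re = a * Real.log (‖w‖) := by
    simp [Complex.mul_re, Complex.log_re, Complex.log_im]
  rw [h1, Real.rpow_def_of_pos (norm_pos_iff.mpr hw), mul_comm]

private lemma aux_abs_exp_mul_real (L : ℝ) (ζ : ℂ) :
    ‖Complex.exp (ζ * (L : ℂ))‖ = Real.exp (ζ.re * L) := by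
  rw [Complex.norm_exp]
  norm_num [Complex.mul_re]

private lemma aux_key (s b d r t : ℝ) (hs : 0 < s) (hb : 0 < b) (hd : 0 ≤ d)
    (hr : 0 < r) (ht : 0 < t) :
    1 + d * (b * r) ^ (-(1/(2*s))) ≤
      (1 + d * (b * t) ^ (-(1/(2*s)))) * (1 + t/r) ^ (1/(2*s)) := by
  set q := 1/(2*s) with hqdef
  have hq : 0 < q := by positivity
  rcases le_total t r with h | h
  · have h1 : (b*r) ^ (-q) ≤ (b*t) ^ (-q) :=
      Real.rpow_le_rpow_of_nonpos (by positivity) (by nlinarith) (by linarith)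
    have h2 : (1:ℝ) ≤ (1 + t/r) ^ q :=
      Real.one_le_rpow (by nlinarith [div_nonneg ht.le hr.le]) hq.le
    have h3 : 0 ≤ 1 + d * (b*t)^(-q) := by positivity
    nlinarith [mul_le_mul_of_nonneg_left h1 hd]
  · have h0 : (1:ℝ) ≤ t/r := (one_le_div hr).2 h
    have h2 : (t/r) ^ q ≤ (1 + t/r) ^ q :=
      Real.rpow_le_rpow (by positivity) (by linarith) hq.le
    have h3 : d * (b*t)^(-q) * (t/r)^q = d * (b*r)^(-q) := by
      rw [Real.div_rpow ht.le hr.le, Real.rpow_neg (by positivity), Real.rpow_neg (by positivity),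
        Real.mul_rpow hb.le ht.le, Real.mul_rpow hb.le hr.le]
      have hbq : (0:ℝ) < b ^ q := Real.rpow_pos_of_pos hb q
      have htq : (0:ℝ) < t ^ q := Real.rpow_pos_of_pos ht q
      have hrq : (0:ℝ) < r ^ q := Real.rpow_pos_of_pos hr q
      field_simp
    have h4 : (1:ℝ) ≤ (t/r)^q := Real.one_le_rpow h0 hq.le
    have h5 : 0 ≤ 1 + d * (b*t)^(-q) := by positivity
    calc 1 + d*(b*r)^(-q) = 1 + d*(b*t)^(-q)*(t/r)^q := by rw [h3]
      _ ≤ (t/r)^q + d*(b*t)^(-q)*(t/r)^q := by linarith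
      _ = (1 + d*(b*t)^(-q)) * (t/r)^q := by ring
      _ ≤ (1 + d*(b*t)^(-q)) * (1+t/r)^q := by
          exact mul_le_mul_of_nonneg_left h2 h5


set_option maxHeartbeats 1000000 in
/-- Key kernel estimate: if `K(z,x,y)` is holomorphic in `z` on the sector
`Σ(θ₂) = {z ≠ 0 : |arg z| < θ₂}`, satisfies `|K(z,x,y)| ≤ C (Re z)^{-N/(2s)}` on `Σ(θ₂)` and
`|K(t,x,y)| ≤ C t^{-N/(2s)} (1 + |x-y|(bt)^{-1/(2s)})^{-(N+2s)}` for real `t > 0`, then for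
every `ε ∈ (0,1]` and `θ₁ ∈ (0, εθ₂)` there is `C' > 0` such that
`|K(z,x,y)| ≤ C' (Re z)^{-N/(2s)} (1 + |x-y|(b|z|)^{-1/(2s)})^{-(N+2s)(1-ε)}` on `Σ(θ₁)`. -/
theorem fractional_kernel_complex_time_bounds (N : ℕ) (hN : 1 ≤ N) (s : ℝ)
    (hs0 : 0 < s) (hs1 : s < 1)
    (Ω : Set (EuclideanSpace ℝ (Fin N))) (θ₂ : ℝ) (hθ₂0 : 0 < θ₂) (hθ₂ : θ₂ < Real.pi / 2)
    (b C : ℝ) (hb : 0 < b) (hC : 0 < C)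
    (K : ℂ → EuclideanSpace ℝ (Fin N) → EuclideanSpace ℝ (Fin N) → ℂ)
    (hKhol : ∀ x ∈ Ω, ∀ y ∈ Ω,
      DifferentiableOn ℂ (fun z => K z x y) {z : ℂ | z ≠ 0 ∧ |z.arg| < θ₂})
    (h1 : ∀ x ∈ Ω, ∀ y ∈ Ω, ∀ z ∈ {z : ℂ | z ≠ 0 ∧ |z.arg| < θ₂},
      ‖K z x y‖ ≤ C * z.re ^ (-((N : ℝ) / (2 * s))))
    (h2 : ∀ x ∈ Ω, ∀ y ∈ Ω, ∀ t : ℝ, 0 < t →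
      ‖K (t : ℂ) x y‖ ≤ C * t ^ (-((N : ℝ) / (2 * s))) *
        (1 + ‖x - y‖ * (b * t) ^ (-(1 / (2 * s)))) ^ (-((N : ℝ) + 2 * s))) :
    ∀ ε : ℝ, 0 < ε → ε ≤ 1 → ∀ θ₁ : ℝ, 0 < θ₁ → θ₁ < ε * θ₂ →
      ∃ C' : ℝ, 0 < C' ∧ ∀ x ∈ Ω, ∀ y ∈ Ω, ∀ z ∈ {z : ℂ | z ≠ 0 ∧ |z.arg| < θ₁},
        ‖K z x y‖ ≤ C' * z.re ^ (-((N : ℝ) / (2 * s))) *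
          (1 + ‖x - y‖ * (b * ‖z‖) ^ (-(1 / (2 * s)))) ^
            (-(((N : ℝ) + 2 * s) * (1 - ε))) := by
  have hπ := Real.pi_pos
  -- the sector is open
  have hSopen : IsOpen {z : ℂ | z ≠ 0 ∧ |z.arg| < θ₂} := by
    rw [isOpen_iff_mem_nhds]
    rintro z ⟨hzne, hzarg⟩
    have hargbound : -(Real.pi/2) < z.arg ∧ z.arg < Real.pi/2 := by
      have := abs_lt.1 hzarg; constructor <;> linarith [this.1, this.2]
    have hzre : 0 < z.re := by
      have hcosz := Complex.cos_arg hzne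
      have hcpos : 0 < Real.cos z.arg :=
        Real.cos_pos_of_mem_Ioo ⟨hargbound.1, hargbound.2⟩
      have habs : 0 < ‖z‖ := norm_pos_iff.mpr hzne
      have : z.re = Real.cos z.arg * ‖z‖ := by
        rw [hcosz]; field_simp
      rw [this]; positivity
    have hslit : z ∈ Complex.slitPlane := Or.inl hzre
    have hcont : ContinuousAt (fun w => |Complex.arg w|) z :=
      (Complex.continuousAt_arg hslit).abs
    have h1ev : ∀ᶠ w in nhds z, |w.arg| < θ₂ := hcont.eventually_lt_const hzarg
    have h2ev : ∀ᶠ w in nhds z, w ≠ 0 := isOpen_ne.mem_nhds hzne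
    exact (h2ev.and h1ev)
  intro ε hε0 hε1 θ₁ hθ₁0 hθ₁ε
  set p : ℝ := (N:ℝ)/(2*s) with hpdef
  have hNpos : (1:ℝ) ≤ (N:ℝ) := by exact_mod_cast hN
  have hp0 : 0 < p := div_pos (by linarith) (by linarith)
  set q : ℝ := 1/(2*s) with hqdef
  have hq0 : 0 < q := by rw [hqdef]; positivity
  set α : ℝ := (N:ℝ) + 2*s with hαdef
  have hα0 : 0 < α := by rw [hαdef]; positivity
  set β : ℝ := α * q with hβdef
  have hβ0 : 0 < β := mul_pos hα0 hq0
  -- intermediate angle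
  have hθ₁ε2 : θ₁/ε < θ₂ := (div_lt_iff₀ hε0).2 (by linarith [mul_comm ε θ₂])
  set θ' : ℝ := (θ₁/ε + θ₂)/2 with hθ'def
  have hθ'big : θ₁/ε < θ' := by rw [hθ'def]; linarith
  have hθ'ltθ₂ : θ' < θ₂ := by rw [hθ'def]; linarith
  have hθ'0 : 0 < θ' := by
    have : 0 < θ₁/ε := div_pos hθ₁0 hε0
    rw [hθ'def]; linarith
  have hθ'π : θ' < Real.pi/2 := hθ'ltθ₂.trans hθ₂
  have hθ₁θ' : θ₁ < ε * θ' := by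
    have := (div_lt_iff₀ hε0).1 hθ'big; linarith [mul_comm θ' ε]
  have hθ₁leθ' : θ₁ ≤ θ' := by nlinarith
  have hcos : 0 < Real.cos θ' := Real.cos_pos_of_mem_Ioo ⟨by linarith, hθ'π⟩
  have hcosp : (1:ℝ) ≤ Real.cos θ' ^ (-p) :=
    Real.one_le_rpow_of_pos_of_le_one_of_nonpos hcos (Real.cos_le_one θ') (by linarith)
  set M : ℝ := C * Real.cos θ' ^ (-p) with hMdef
  have hM0 : 0 < M := by rw [hMdef]; positivity
  have hCM : C ≤ M := by
    rw [hMdef]; nlinarith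
  refine ⟨M * 2 ^ β, by positivity, ?_⟩
  intro x hx y hy z₀ hz₀
  obtain ⟨hz₀ne, hz₀arg⟩ := hz₀
  set d : ℝ := ‖x - y‖ with hddef
  have hd : 0 ≤ d := norm_nonneg _
  set r : ℝ := ‖z₀‖ with hrdef
  have hr : 0 < r := norm_pos_iff.mpr hz₀ne
  set ψ : ℝ := z₀.arg with hψdef
  have hψθ₁ : |ψ| < θ₁ := hz₀arg
  set u₀ : ℝ := d * (b*r) ^ (-q) with hu₀def
  have hu₀ : 0 ≤ u₀ := by rw [hu₀def]; positivity
  set ξ : ℝ := (1+u₀) ^ (-α) with hξdef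
  have hξ0 : 0 < ξ := by rw [hξdef]; positivity
  have hξ1 : ξ ≤ 1 := by
    rw [hξdef]
    exact Real.rpow_le_one_of_one_le_of_nonpos (by linarith) (by linarith)
  set σ : ℝ := if 0 ≤ ψ then 1 else -1 with hσdef
  have hσabs : |σ| = 1 := by
    rw [hσdef]; split <;> simp
  have hσψ : σ * |ψ| = ψ := by
    rw [hσdef]; rcases le_or_gt 0 ψ with h | h
    · rw [if_pos h, abs_of_nonneg h, one_mul]
    · rw [if_neg (not_le.2 h), abs_of_neg h]; ring
  set e : ℂ → ℂ := fun ζ => (r:ℂ) * Complex.exp ((↑(σ*θ') : ℂ) * Complex.I * ζ) with hedef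
  have hene : ∀ ζ, e ζ ≠ 0 := fun ζ =>
    mul_ne_zero (by exact_mod_cast hr.ne') (Complex.exp_ne_zero _)
  have hesplit : ∀ ζ : ℂ, e ζ =
      ((r * Real.exp (-(σ*θ'*ζ.im)) : ℝ) : ℂ) * Complex.exp ((↑(σ*θ'*ζ.re) : ℂ) * Complex.I) := by
    intro ζ
    have harg : (↑(σ*θ') : ℂ) * Complex.I * ζ =
        ((-(σ*θ'*ζ.im) : ℝ) : ℂ) + (↑(σ*θ'*ζ.re) : ℂ) * Complex.I := by
      apply Complex.ext <;> simp [Complex.mul_re, Complex.mul_im] <;> ring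
    show (r:ℂ) * Complex.exp ((↑(σ*θ') : ℂ) * Complex.I * ζ) = _
    rw [harg, Complex.exp_add]
    push_cast [Complex.ofReal_exp]
    ring
  have habs_e : ∀ ζ : ℂ, ‖e ζ‖ = r * Real.exp (-(σ*θ'*ζ.im)) := by
    intro ζ
    rw [hesplit ζ, norm_mul, Complex.norm_real, Real.norm_eq_abs, Complex.norm_exp_ofReal_mul_I,
      abs_of_pos (by positivity), mul_one]
  have harg_e : ∀ ζ : ℂ, |σ*θ'*ζ.re| < Real.pi → (e ζ).arg = σ*θ'*ζ.re := by
    intro ζ h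
    rw [hesplit ζ, Complex.arg_real_mul _ (by positivity), Complex.arg_exp_mul_I,
      toIocMod_eq_self]
    have := abs_lt.1 h
    constructor
    · linarith [this.1]
    · linarith [this.2]
  -- the enlarged strip
  set δ : ℝ := (θ₂/θ' - 1)/2 with hδdef
  have hδ0 : 0 < δ := by
    have := (one_lt_div hθ'0).2 hθ'ltθ₂
    rw [hδdef]; linarith
  have hδθ : (1+δ)*θ' < θ₂ := by
    have h : (1+δ)*θ' = (θ' + θ₂)/2 := by
      rw [hδdef]; field_simp; ring
    rw [h]; linarith
  have hargbd : ∀ ζ : ℂ, |ζ.re| ≤ 1 + δ → |σ*θ'*ζ.re| < θ₂ := by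
    intro ζ hζ
    have : |σ*θ'*ζ.re| = θ' * |ζ.re| := by
      rw [abs_mul, abs_mul, hσabs, abs_of_pos hθ'0]; ring
    rw [this]
    calc θ' * |ζ.re| ≤ θ' * (1+δ) := mul_le_mul_of_nonneg_left hζ hθ'0.le
      _ < θ₂ := by rw [mul_comm]; exact hδθ
  have hsector : ∀ ζ : ℂ, |ζ.re| ≤ 1 + δ → e ζ ∈ {z : ℂ | z ≠ 0 ∧ |z.arg| < θ₂} := by
    intro ζ hζ
    refine ⟨hene ζ, ?_⟩
    rw [harg_e ζ ((hargbd ζ hζ).trans (by linarith))]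
    exact hargbd ζ hζ
  have hre_e : ∀ ζ : ℂ, |ζ.re| ≤ 1+δ →
      (e ζ).re = ‖e ζ‖ * Real.cos (σ*θ'*ζ.re) := by
    intro ζ hζ
    have hc := Complex.cos_arg (hene ζ)
    rw [harg_e ζ ((hargbd ζ hζ).trans (by linarith))] at hc
    have habs0 : ‖e ζ‖ ≠ 0 := (norm_pos_iff.mpr (hene ζ)).ne'
    field_simp at hc
    linarith [hc]
  have hre_pos : ∀ ζ : ℂ, |ζ.re| ≤ 1+δ → 0 < (e ζ).re := by
    intro ζ hζ
    rw [hre_e ζ hζ]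
    have h1 := hargbd ζ hζ
    have habs := abs_lt.1 h1
    have hcpos : 0 < Real.cos (σ*θ'*ζ.re) :=
      Real.cos_pos_of_mem_Ioo ⟨by linarith, by linarith⟩
    have := norm_pos_iff.mpr (hene ζ)
    positivity
  -- the auxiliary holomorphic function on the strip
  set L : ℝ := Real.log ξ with hLdef
  set H : ℂ → ℂ := fun ζ => Complex.exp ((↑p : ℂ) * Complex.log (e ζ)) * K (e ζ) x y *
      Complex.exp ((↑(-β) : ℂ) * Complex.log (1 + e ζ / (r:ℂ))) *
      Complex.exp ((ζ - 1) * (L : ℂ)) with hHdef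
  have hone_re : ∀ ζ : ℂ, |ζ.re| ≤ 1+δ → 1 ≤ (1 + e ζ / (r:ℂ)).re := by
    intro ζ hζ
    have h := hre_pos ζ hζ
    have heq : (1 + e ζ / (r:ℂ)).re = 1 + (e ζ).re / r := by
      simp [Complex.add_re, Complex.div_ofReal_re]
    rw [heq]
    have : 0 ≤ (e ζ).re / r := by positivity
    linarith
  have hone_abs : ∀ ζ : ℂ, |ζ.re| ≤ 1+δ → 1 ≤ ‖1 + e ζ / (r:ℂ)‖ :=
    fun ζ hζ => (hone_re ζ hζ).trans (Complex.re_le_norm _)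
  have hone_ne : ∀ ζ : ℂ, |ζ.re| ≤ 1+δ → (1 + e ζ / (r:ℂ)) ≠ 0 := by
    intro ζ hζ h0
    have := hone_abs ζ hζ
    rw [h0] at this
    norm_num at this
  have habsH : ∀ ζ : ℂ, |ζ.re| ≤ 1+δ → ‖H ζ‖ =
      ‖e ζ‖ ^ p * ‖K (e ζ) x y‖ *
        ‖1 + e ζ / (r:ℂ)‖ ^ (-β) * ξ ^ (ζ.re - 1) := by
    intro ζ hζ
    show ‖Complex.exp ((↑p:ℂ) * Complex.log (e ζ)) * K (e ζ) x y *
        Complex.exp ((↑(-β):ℂ) * Complex.log (1 + e ζ / (r:ℂ))) * Complex.exp ((ζ-1) * (L:ℂ))‖ = _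
    rw [norm_mul, norm_mul, norm_mul, aux_abs_exp_mul_log p _ (hene ζ),
      aux_abs_exp_mul_log (-β) _ (hone_ne ζ hζ), aux_abs_exp_mul_real L (ζ-1)]
    congr 1
    rw [Real.rpow_def_of_pos hξ0, Complex.sub_re, Complex.one_re]
    congr 1
    ring
  -- uniform bound on the closed strip
  have hHbound : ∀ ζ : ℂ, 0 ≤ ζ.re → ζ.re ≤ 1 → ‖H ζ‖ ≤ M * ξ ^ (ζ.re - 1) := by
    intro ζ hre0 hre1
    have hζδ : |ζ.re| ≤ 1+δ := by rw [abs_of_nonneg hre0]; linarith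
    rw [habsH ζ hζδ]
    have habse : 0 < ‖e ζ‖ := norm_pos_iff.mpr (hene ζ)
    have hKe := h1 x hx y hy _ (hsector ζ hζδ)
    have hcosle : Real.cos θ' ≤ Real.cos (σ*θ'*ζ.re) := by
      have h5 : |σ*θ'*ζ.re| = θ' * ζ.re := by
        rw [abs_mul, abs_mul, hσabs, abs_of_pos hθ'0, abs_of_nonneg hre0]; ring
      have h6 : θ' * ζ.re ≤ θ' := by
        calc θ' * ζ.re ≤ θ' * 1 := mul_le_mul_of_nonneg_left hre1 hθ'0.le
          _ = θ' := mul_one θ'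
      have h7 : 0 ≤ θ' * ζ.re := mul_nonneg hθ'0.le hre0
      calc Real.cos θ' ≤ Real.cos (θ' * ζ.re) := by
            apply Real.cos_le_cos_of_nonneg_of_le_pi h7 (by linarith) h6
        _ = Real.cos |σ*θ'*ζ.re| := by rw [h5]
        _ = Real.cos (σ*θ'*ζ.re) := Real.cos_abs _
    have hree : ‖e ζ‖ * Real.cos θ' ≤ (e ζ).re := by
      rw [hre_e ζ hζδ]
      exact mul_le_mul_of_nonneg_left hcosle habse.le
    have hKe2 : ‖K (e ζ) x y‖ ≤
        C * (‖e ζ‖ ^ (-p) * Real.cos θ' ^ (-p)) := by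
      refine hKe.trans ?_
      rw [← Real.mul_rpow habse.le hcos.le]
      exact mul_le_mul_of_nonneg_left
        (Real.rpow_le_rpow_of_nonpos (by positivity) hree (by linarith)) hC.le
    have hcancel : ‖e ζ‖ ^ p * ‖e ζ‖ ^ (-p) = 1 := by
      rw [← Real.rpow_add habse]; simp
    have hAle1 : ‖1 + e ζ / (r:ℂ)‖ ^ (-β) ≤ 1 :=
      Real.rpow_le_one_of_one_le_of_nonpos (hone_abs ζ hζδ) (by linarith)
    have hξnn : (0:ℝ) ≤ ξ ^ (ζ.re - 1) := (Real.rpow_pos_of_pos hξ0 _).le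
    calc ‖e ζ‖ ^ p * ‖K (e ζ) x y‖ *
          ‖1 + e ζ / (r:ℂ)‖ ^ (-β) * ξ ^ (ζ.re - 1)
        ≤ ‖e ζ‖ ^ p * (C * (‖e ζ‖ ^ (-p) * Real.cos θ' ^ (-p))) *
          1 * ξ ^ (ζ.re - 1) := by
          apply mul_le_mul_of_nonneg_right _ hξnn
          apply mul_le_mul _ hAle1 (by positivity) (by positivity)
          exact mul_le_mul_of_nonneg_left hKe2 (by positivity)
      _ = (‖e ζ‖ ^ p * ‖e ζ‖ ^ (-p)) *
          (C * Real.cos θ' ^ (-p)) * ξ ^ (ζ.re - 1) := by ring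
      _ = M * ξ ^ (ζ.re - 1) := by rw [hcancel, one_mul, hMdef]
  -- bound on the line re = 1
  have hlineb : ∀ ζ : ℂ, ζ.re = 1 → ‖H ζ‖ ≤ M := by
    intro ζ hζre
    have h0 := hHbound ζ (by rw [hζre]; norm_num) (le_of_eq hζre)
    rw [hζre] at h0
    simpa using h0
  -- bound on the line re = 0, using the real-axis estimate h2
  have hlinea : ∀ ζ : ℂ, ζ.re = 0 → ‖H ζ‖ ≤ M := by
    intro ζ hζre
    set t : ℝ := r * Real.exp (-(σ*θ'*ζ.im)) with htdef
    have ht : 0 < t := by rw [htdef]; positivity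
    have het : e ζ = (t:ℂ) := by
      rw [hesplit ζ, hζre]
      rw [htdef]
      push_cast
      simp [Complex.exp_zero]
    have hζδ : |ζ.re| ≤ 1+δ := by rw [hζre]; simp; linarith
    rw [habsH ζ hζδ, het, hζre]
    have habst : ‖(t:ℂ)‖ = t := by rw [Complex.norm_real, Real.norm_eq_abs, abs_of_pos ht]
    have hco : (1 + (t:ℂ)/(r:ℂ)) = ((1 + t/r : ℝ) : ℂ) := by push_cast; ring
    rw [habst, hco, Complex.norm_real, Real.norm_eq_abs, abs_of_pos (by positivity)]
    have hKt := h2 x hx y hy t ht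
    have hkey := aux_key s b d r t hs0 hb hd hr ht
    -- rewrite aux_key's exponents in terms of q
    rw [← hqdef] at hkey
    have hstep : (1 + d*(b*t)^(-q))^(-α) * (1+t/r)^(-β) ≤ ξ := by
      have hbase0 : (0:ℝ) < 1 + d*(b*t)^(-q) := by positivity
      have hbase1 : (0:ℝ) < 1 + t/r := by positivity
      have hA : (1+u₀)^α ≤ ((1 + d*(b*t)^(-q)) * (1+t/r)^q)^α := by
        apply Real.rpow_le_rpow (by positivity) _ hα0.le
        rw [hu₀def]
        exact hkey
      rw [Real.mul_rpow hbase0.le (Real.rpow_pos_of_pos hbase1 q).le,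
        ← Real.rpow_mul hbase1.le] at hA
      have hmul : q * α = β := by rw [hβdef]; ring
      rw [hmul] at hA
      rw [hξdef, Real.rpow_neg (show (0:ℝ) ≤ 1+u₀ by positivity) α,
        Real.rpow_neg hbase0.le α, Real.rpow_neg hbase1.le β, ← mul_inv]
      exact inv_anti₀ (by positivity) hA
    have hcancel : t ^ p * t ^ (-p) = 1 := by
      rw [← Real.rpow_add ht]; simp
    have hξinv : ξ ^ ((0:ℝ) - 1) = ξ⁻¹ := by
      norm_num
      exact Real.rpow_neg_one ξ
    rw [hξinv]
    calc t ^ p * ‖K ((t:ℂ)) x y‖ * (1+t/r)^(-β) * ξ⁻¹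
        ≤ t ^ p * (C * t ^ (-p) * (1 + d*(b*t)^(-q))^(-α)) * (1+t/r)^(-β) * ξ⁻¹ := by
          have hKt' : ‖K ((t:ℂ)) x y‖ ≤ C * t ^ (-p) * (1 + d*(b*t)^(-q))^(-α) := by
            rw [hddef]; exact hKt
          apply mul_le_mul_of_nonneg_right _ (by positivity)
          apply mul_le_mul_of_nonneg_right _ (by positivity)
          exact mul_le_mul_of_nonneg_left hKt' (by positivity)
      _ = C * ((t ^ p * t ^ (-p)) * ((1 + d*(b*t)^(-q))^(-α) * (1+t/r)^(-β) * ξ⁻¹)) := by ring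
      _ ≤ C * ((1 : ℝ) * (ξ * ξ⁻¹)) := by
          apply mul_le_mul_of_nonneg_left _ hC.le
          rw [hcancel, one_mul, one_mul]
          exact mul_le_mul_of_nonneg_right hstep (by positivity)
      _ ≤ M := by
          rw [one_mul, mul_inv_cancel₀ hξ0.ne']
          simpa using hCM
  -- differentiability on an enlarged open strip
  set U : Set ℂ := Complex.re ⁻¹' Set.Ioo (-δ) (1+δ) with hUdef
  have hUopen : IsOpen U := isOpen_Ioo.preimage Complex.continuous_re
  have hUabs : ∀ ζ : ℂ, ζ ∈ U → |ζ.re| ≤ 1+δ := by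
    intro ζ hζ
    obtain ⟨ha, hb'⟩ := hζ
    rw [abs_le]
    constructor <;> linarith
  have hHdiffU : DifferentiableOn ℂ H U := by
    intro ζ hζ
    have hζδ := hUabs ζ hζ
    have hseq := hsector ζ hζδ
    have heat : DifferentiableAt ℂ e ζ := by
      apply DifferentiableAt.const_mul
      apply DifferentiableAt.cexp
      exact differentiableAt_id.const_mul _
    have hlog1 : DifferentiableAt ℂ (fun w => Complex.log (e w)) ζ :=
      heat.clog (Or.inl (hre_pos ζ hζδ))
    have hKdiff : DifferentiableAt ℂ (fun w => K (e w) x y) ζ := by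
      have h := (hKhol x hx y hy).differentiableAt (hSopen.mem_nhds hseq)
      exact h.comp ζ heat
    have hlog2 : DifferentiableAt ℂ (fun w => Complex.log (1 + e w / (r:ℂ))) ζ := by
      have hd2 : DifferentiableAt ℂ (fun w => 1 + e w / (r:ℂ)) ζ := by
        apply DifferentiableAt.const_add
        exact heat.div_const _
      apply hd2.clog
      left
      have := hone_re ζ hζδ
      linarith
    apply DifferentiableAt.differentiableWithinAt
    apply DifferentiableAt.mul
    apply DifferentiableAt.mul
    apply DifferentiableAt.mul
    · exact (hlog1.const_mul _).cexp
    · exact hKdiff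
    · exact (hlog2.const_mul _).cexp
    · exact ((differentiableAt_id.sub_const 1).mul_const _).cexp
  have hdc : DiffContOnCl ℂ H (Complex.re ⁻¹' Set.Ioo 0 1) := by
    constructor
    · apply hHdiffU.mono
      intro ζ hζ
      exact ⟨by linarith [hζ.1], by linarith [hζ.2]⟩
    · have hsub : closure (Complex.re ⁻¹' Set.Ioo 0 1) ⊆ U := by
        refine (Continuous.closure_preimage_subset Complex.continuous_re _).trans ?_
        intro ζ hζ
        rw [closure_Ioo (by norm_num : (0:ℝ) ≠ 1)] at hζ
        exact ⟨by linarith [hζ.1], by linarith [hζ.2]⟩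
      exact (hHdiffU.continuousOn).mono hsub
  -- the target point on the strip
  set ust : ℝ := |ψ|/θ' with hustdef
  have hust0 : 0 ≤ ust := div_nonneg (abs_nonneg ψ) hθ'0.le
  have hust1 : ust ≤ 1 := by
    rw [hustdef]
    apply (div_le_one hθ'0).2
    linarith
  have hustε : ust ≤ ε := by
    rw [hustdef]
    apply (div_le_iff₀ hθ'0).2
    calc |ψ| ≤ θ₁ := hψθ₁.le
      _ ≤ ε * θ' := hθ₁θ'.le
  -- Phragmén–Lindelöf
  have hPL : ‖H ((ust:ℝ):ℂ)‖ ≤ M := by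
    apply PhragmenLindelof.vertical_strip hdc ?_ hlinea hlineb ?_ ?_
    · refine ⟨0, by norm_num [hπ], 0, ?_⟩
      rw [Asymptotics.isBigO_iff]
      refine ⟨M * ξ⁻¹, ?_⟩
      rw [Filter.eventually_inf_principal]
      apply Filter.Eventually.of_forall
      intro ζ hζ
      have h0 : 0 ≤ ζ.re := le_of_lt hζ.1
      have h1' : ζ.re ≤ 1 := le_of_lt hζ.2
      have hbd := hHbound ζ h0 h1'
      have hle : ξ ^ (ζ.re - 1) ≤ ξ⁻¹ := by
        rw [← Real.rpow_neg_one ξ]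
        exact Real.rpow_le_rpow_of_exponent_ge hξ0 hξ1 (by linarith)
      simp only [mul_zero, zero_mul, Real.exp_zero, norm_one, mul_one]
      calc ‖H ζ‖ ≤ M * ξ ^ (ζ.re - 1) := hbd
        _ ≤ M * ξ⁻¹ := mul_le_mul_of_nonneg_left hle hM0.le
    · rw [Complex.ofReal_re]; exact hust0
    · rw [Complex.ofReal_re]; exact hust1
  -- evaluate at the target point
  have hζstar_e : e ((ust:ℝ):ℂ) = z₀ := by
    rw [hesplit]
    rw [Complex.ofReal_im, Complex.ofReal_re]
    have h5 : σ*θ'*ust = ψ := by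
      have h6 : σ*θ'*(|ψ|/θ') = σ*|ψ| := by
        field_simp
      rw [hustdef, h6, hσψ]
    rw [mul_zero, neg_zero, Real.exp_zero, mul_one, h5]
    rw [hrdef, hψdef]
    exact Complex.norm_mul_exp_arg_mul_I z₀
  have heval : ‖H ((ust:ℝ):ℂ)‖ =
      r ^ p * ‖K z₀ x y‖ * ‖1 + z₀/(r:ℂ)‖ ^ (-β) * ξ ^ (ust - 1) := by
    rw [habsH _ (by rw [Complex.ofReal_re, abs_of_nonneg hust0]; linarith), hζstar_e,
      Complex.ofReal_re, ← hrdef]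
  set A : ℝ := ‖1 + z₀/(r:ℂ)‖ with hAdef
  have hApos : 0 < A := by
    have h7 := hone_abs ((ust:ℝ):ℂ) (by rw [Complex.ofReal_re, abs_of_nonneg hust0]; linarith)
    rw [hζstar_e] at h7
    rw [hAdef]; linarith
  have hA1 : 1 ≤ A := by
    have h7 := hone_abs ((ust:ℝ):ℂ) (by rw [Complex.ofReal_re, abs_of_nonneg hust0]; linarith)
    rw [hζstar_e] at h7
    rw [hAdef]; exact h7
  have hAle2 : A ≤ 2 := by
    rw [hAdef]
    calc ‖1 + z₀/(r:ℂ)‖ ≤ ‖1‖ + ‖z₀/(r:ℂ)‖ :=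
          norm_add_le _ _
      _ = 1 + r / r := by
          rw [norm_one, norm_div, Complex.norm_real, Real.norm_eq_abs, abs_of_pos hr, ← hrdef]
      _ = 2 := by rw [div_self hr.ne']; norm_num
  have hKE : ‖K z₀ x y‖ * (r ^ p * A ^ (-β) * ξ ^ (ust - 1)) ≤ M := by
    calc ‖K z₀ x y‖ * (r ^ p * A ^ (-β) * ξ ^ (ust - 1))
        = r ^ p * ‖K z₀ x y‖ * A ^ (-β) * ξ ^ (ust - 1) := by ring
      _ ≤ M := by rw [hAdef, ← heval]; exact hPL
  have e1 : r^p * r^(-p) = 1 := by rw [← Real.rpow_add hr]; simp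
  have e2 : A^(-β) * A^β = 1 := by rw [← Real.rpow_add hApos]; simp
  have e3 : ξ^(ust-1) * ξ^(1-ust) = 1 := by
    rw [← Real.rpow_add hξ0, show (ust-1)+(1-ust) = 0 by ring, Real.rpow_zero]
  have hEP : (r ^ p * A ^ (-β) * ξ ^ (ust - 1)) * (r ^ (-p) * A ^ β * ξ ^ (1 - ust)) = 1 := by
    calc (r ^ p * A ^ (-β) * ξ ^ (ust - 1)) * (r ^ (-p) * A ^ β * ξ ^ (1 - ust))
        = (r^p*r^(-p)) * ((A^(-β)*A^β) * (ξ^(ust-1)*ξ^(1-ust))) := by ring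
      _ = 1 := by rw [e1, e2, e3]; norm_num
  have hKle : ‖K z₀ x y‖ ≤ M * (r^(-p) * A^β * ξ^(1-ust)) := by
    have hPnn : 0 ≤ r^(-p) * A^β * ξ^(1-ust) := by positivity
    calc ‖K z₀ x y‖
        = ‖K z₀ x y‖ * ((r ^ p * A ^ (-β) * ξ ^ (ust - 1)) *
            (r ^ (-p) * A ^ β * ξ ^ (1 - ust))) := by rw [hEP, mul_one]
      _ = (‖K z₀ x y‖ * (r ^ p * A ^ (-β) * ξ ^ (ust - 1))) *
            (r ^ (-p) * A ^ β * ξ ^ (1 - ust)) := by ring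
      _ ≤ M * (r^(-p) * A^β * ξ^(1-ust)) := mul_le_mul_of_nonneg_right hKE hPnn
  -- final estimates
  have hz₀re : 0 < z₀.re := by
    have habs9 := abs_lt.1 hψθ₁
    have hcosψ : 0 < Real.cos ψ :=
      Real.cos_pos_of_mem_Ioo ⟨by linarith, by linarith⟩
    have hc := Complex.cos_arg hz₀ne
    rw [← hψdef, ← hrdef] at hc
    rw [eq_div_iff hr.ne'] at hc
    rw [← hc]
    positivity
  have hfin1 : r^(-p) ≤ z₀.re^(-p) := by
    apply Real.rpow_le_rpow_of_nonpos hz₀re _ (by linarith)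
    rw [hrdef]
    exact Complex.re_le_norm z₀
  have hfin2 : A^β ≤ (2:ℝ)^β := Real.rpow_le_rpow hApos.le hAle2 hβ0.le
  have hfin3 : ξ^(1-ust) ≤ ξ^(1-ε) := by
    apply Real.rpow_le_rpow_of_exponent_ge hξ0 hξ1
    linarith
  have hfin4 : ξ^((1:ℝ)-ε) = (1+u₀)^(-(α*(1-ε))) := by
    rw [hξdef, ← Real.rpow_mul (by positivity : (0:ℝ) ≤ 1+u₀), neg_mul]
  calc ‖K z₀ x y‖ ≤ M * (r^(-p) * A^β * ξ^(1-ust)) := hKle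
    _ ≤ M * (z₀.re^(-p) * (2:ℝ)^β * ξ^(1-ε)) := by
        apply mul_le_mul_of_nonneg_left _ hM0.le
        have t1 : r^(-p) * A^β ≤ z₀.re^(-p) * (2:ℝ)^β :=
          mul_le_mul hfin1 hfin2 (by positivity) (by positivity)
        exact mul_le_mul t1 hfin3 (by positivity) (by positivity)
    _ = M * 2^β * z₀.re^(-p) * (1+u₀)^(-(α*(1-ε))) := by rw [← hfin4]; ring
end

section
/- Let N ≥ 1, 0 < s < 1, let Ω ⊆ ℝ^N be a measurable set with Lebesgue measure, and let 0 < θ₂ < θ₃ < π/2. Let T : Σ(π/2) → ℒ(L²(Ω;ℂ)) satisfy the semigroup law T(z₁+z₂) = T(z₁)∘T(z₂) for all z₁, z₂ ∈ Σ(π/2). Assume there is a constant C > 0 such that: (i) ‖T(z)‖_{ℒ(L²(Ω))} ≤ C for all z ∈ Σ(θ₃); (ii) for every real t > 0 and every f ∈ L¹(Ω) ∩ L²(Ω), ‖T(t)f‖_{L²(Ω)} ≤ C t^{-N/(4s)} ‖f‖_{L¹(Ω)}; and (iii) for every real t > 0 and every f ∈ L²(Ω), T(t)f has an essentially bounded representative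 with ‖T(t)f‖_{L^∞(Ω)} ≤ C t^{-N/(4s)} ‖f‖_{L²(Ω)}. Then there is a constant C' > 0 such that for every z ∈ Σ(θ₂) and every f ∈ L¹(Ω) ∩ L²(Ω), T(z)f has an essentially bounded representative and ‖T(z)f‖_{L^∞(Ω)} ≤ C' (Re z)^{-N/(2s)} ‖f‖_{L¹(Ω)}. -/
set_option maxHeartbeats 1000000


open MeasureTheory Real

lemma my_tan_abs {x : ℝ} (hx : -(Real.pi/2) < x) (hx' : x < Real.pi/2) :
    Real.tan |x| = |Real.tan x| := by
  rcases le_or_gt 0 x with h | h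
  · rw [abs_of_nonneg h, abs_of_nonneg (Real.tan_nonneg_of_nonneg_of_le_pi_div_two h hx'.le)]
  · rw [abs_of_neg h, Real.tan_neg, abs_of_neg (Real.tan_neg_of_neg_of_pi_div_two_lt h hx)]

/-- If `0 < z.re` and `|arg z| < θ < π/2` then `|z.im| < z.re * tan θ`. -/
lemma my_im_lt_of_arg_lt {z : ℂ} {θ : ℝ} (h0 : 0 < z.re) (hθ : θ < Real.pi/2)
    (h : |z.arg| < θ) : |z.im| < z.re * Real.tan θ := by
  have harg2 : |z.arg| < Real.pi / 2 := h.trans hθ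
  have h1 : -(Real.pi/2) < z.arg := by
    have := abs_lt.1 harg2; linarith [this.1]
  have h2 : z.arg < Real.pi/2 := (le_abs_self _).trans_lt harg2
  have htan : Real.tan |z.arg| < Real.tan θ :=
    Real.tan_lt_tan_of_nonneg_of_lt_pi_div_two (abs_nonneg _) hθ h
  rw [my_tan_abs h1 h2, Complex.tan_arg, abs_div, abs_of_pos h0,
    div_lt_iff₀ h0] at htan
  linarith [htan]

/-- If `0 < z.re` and `|z.im| < z.re * tan θ` with `0 < θ < π/2`, then `|arg z| < θ`. -/
lemma my_arg_lt_of_im_lt {z : ℂ} {θ : ℝ} (h0 : 0 < z.re) (hθ0 : 0 < θ)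
    (hθ : θ < Real.pi/2) (h : |z.im| < z.re * Real.tan θ) : |z.arg| < θ := by
  have harg2 : |z.arg| < Real.pi / 2 :=
    Complex.abs_arg_lt_pi_div_two_iff.2 (Or.inl h0)
  have h1 : -(Real.pi/2) < z.arg := by
    have := abs_lt.1 harg2; linarith [this.1]
  have h2 : z.arg < Real.pi/2 := (le_abs_self _).trans_lt harg2
  by_contra hcon
  push_neg at hcon
  have hmono : Real.tan θ ≤ Real.tan |z.arg| := by
    rcases eq_or_lt_of_le hcon with he | hl
    · rw [he]
    · exact (Real.tan_lt_tan_of_nonneg_of_lt_pi_div_two hθ0.le harg2 hl).le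
  rw [my_tan_abs h1 h2, Complex.tan_arg, abs_div, abs_of_pos h0,
    le_div_iff₀ h0] at hmono
  nlinarith

/-- Composition/decomposition argument: if a semigroup `T` on the sector `Σ(π/2)` over
`L²(Ω)` is uniformly bounded on `L²` in a sector `Σ(θ₃)` and satisfies the real-time bounds
`‖T(t)‖_{L¹→L²} ≤ C t^{-N/(4s)}` and `‖T(t)‖_{L²→L^∞} ≤ C t^{-N/(4s)}`, then on any smaller
sector `Σ(θ₂)` with `θ₂ < θ₃` one has `‖T(z)‖_{L¹→L^∞} ≤ C' (Re z)^{-N/(2s)}`. -/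
theorem l1_linfty_bound_on_sector (N : ℕ) (hN : 1 ≤ N) (s : ℝ)
    (hs0 : 0 < s) (hs1 : s < 1)
    (Ω : Set (EuclideanSpace ℝ (Fin N))) (hΩ : MeasurableSet Ω)
    (θ₂ θ₃ : ℝ) (hθ₂0 : 0 < θ₂) (hθ₂₃ : θ₂ < θ₃) (hθ₃ : θ₃ < Real.pi / 2)
    (T : ℂ → Lp ℂ 2 (volume.restrict Ω) →L[ℂ] Lp ℂ 2 (volume.restrict Ω))
    (hTsg : ∀ z₁ ∈ {z : ℂ | z ≠ 0 ∧ |z.arg| < Real.pi / 2},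
      ∀ z₂ ∈ {z : ℂ | z ≠ 0 ∧ |z.arg| < Real.pi / 2},
        T (z₁ + z₂) = (T z₁).comp (T z₂))
    (C : ℝ) (hC : 0 < C)
    (hL2 : ∀ z ∈ {z : ℂ | z ≠ 0 ∧ |z.arg| < θ₃}, ‖T z‖ ≤ C)
    (hL1L2 : ∀ t : ℝ, 0 < t → ∀ f : Lp ℂ 2 (volume.restrict Ω),
      MemLp (⇑f) 1 (volume.restrict Ω) →
        ‖T (t : ℂ) f‖ ≤ C * t ^ (-((N : ℝ) / (4 * s))) *
          (eLpNorm (⇑f) 1 (volume.restrict Ω)).toReal)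
    (hL2Linf : ∀ t : ℝ, 0 < t → ∀ f : Lp ℂ 2 (volume.restrict Ω),
      eLpNorm (⇑(T (t : ℂ) f)) ⊤ (volume.restrict Ω) ≤
        ENNReal.ofReal (C * t ^ (-((N : ℝ) / (4 * s))) * ‖f‖)) :
    ∃ C' : ℝ, 0 < C' ∧ ∀ z ∈ {z : ℂ | z ≠ 0 ∧ |z.arg| < θ₂},
      ∀ f : Lp ℂ 2 (volume.restrict Ω), MemLp (⇑f) 1 (volume.restrict Ω) →
        eLpNorm (⇑(T z f)) ⊤ (volume.restrict Ω) ≤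
          ENNReal.ofReal (C' * z.re ^ (-((N : ℝ) / (2 * s)))) *
            eLpNorm (⇑f) 1 (volume.restrict Ω) := by
  have hθ₂half : θ₂ < Real.pi / 2 := hθ₂₃.trans hθ₃
  set a : ℝ := Real.tan θ₂ with ha_def
  set b : ℝ := Real.tan θ₃ with hb_def
  have ha : 0 < a := Real.tan_pos_of_pos_of_lt_pi_div_two hθ₂0 hθ₂half
  have hab : a < b :=
    Real.tan_lt_tan_of_nonneg_of_lt_pi_div_two hθ₂0.le hθ₃ hθ₂₃
  have hb : 0 < b := ha.trans hab
  set ε : ℝ := (1 - a / b) / 4 with hε_def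
  have hδ : a / b < 1 := (div_lt_one hb).2 hab
  have hε0 : 0 < ε := by simp only [hε_def]; linarith
  have hε1 : ε < 1 / 4 := by
    have : 0 < a / b := div_pos ha hb
    simp only [hε_def]; linarith
  set α : ℝ := -((N : ℝ) / (4 * s)) with hα_def
  refine ⟨C ^ 3 * ε ^ (-((N : ℝ) / (2 * s))), by positivity, ?_⟩
  rintro z ⟨hz0, hzarg⟩ f hf
  have ht : 0 < z.re := by
    rcases Complex.abs_arg_lt_pi_div_two_iff.1 (hzarg.trans hθ₂half) with h | h
    · exact h
    · exact absurd h hz0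
  set t : ℝ := z.re with ht_def
  have him : |z.im| < t * a := my_im_lt_of_arg_lt ht hθ₂half hzarg
  have hεt : 0 < ε * t := mul_pos hε0 ht
  set w : ℂ := z - ((2 * (ε * t) : ℝ) : ℂ) with hw_def
  have hwre : w.re = (1 - 2 * ε) * t := by
    simp [hw_def]; ring
  have hwim : w.im = z.im := by simp [hw_def]
  have hw0 : 0 < w.re := by rw [hwre]; nlinarith
  have hwarg : |w.arg| < θ₃ := by
    apply my_arg_lt_of_im_lt hw0 (hθ₂0.trans hθ₂₃) hθ₃
    rw [hwim, hwre, ← hb_def]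
    -- |z.im| < t*a < (1-2ε)*t*b  since  a < (1-2ε)*b = (1+a/b)/2 * b = (b+a)/2
    have h1 : (1 - 2 * ε) * b = (b + a) / 2 := by
      simp only [hε_def]; field_simp; ring
    have h2 : t * a < (1 - 2 * ε) * t * b := by
      rw [mul_comm (1 - 2*ε) t, mul_assoc, h1]; nlinarith
    linarith
  -- membership in the right-half-plane sector
  have memS : ∀ u : ℂ, 0 < u.re → u ∈ {z : ℂ | z ≠ 0 ∧ |z.arg| < Real.pi / 2} := by
    intro u hu
    refine ⟨fun h => by simp [h] at hu, Complex.abs_arg_lt_pi_div_two_iff.2 (Or.inl hu)⟩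
  have memεt : ((ε * t : ℝ) : ℂ) ∈ {z : ℂ | z ≠ 0 ∧ |z.arg| < Real.pi / 2} :=
    memS _ (by simpa using hεt)
  have memw : w ∈ {z : ℂ | z ≠ 0 ∧ |z.arg| < Real.pi / 2} := memS _ hw0
  have memwεt : (w + ((ε * t : ℝ) : ℂ)) ∈ {z : ℂ | z ≠ 0 ∧ |z.arg| < Real.pi / 2} := by
    apply memS
    simp only [Complex.add_re, Complex.ofReal_re, hwre]
    nlinarith
  have hzeq : ((ε * t : ℝ) : ℂ) + (w + ((ε * t : ℝ) : ℂ)) = z := by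
    simp only [hw_def]; push_cast; ring
  have hdecomp : T z f = T ((ε * t : ℝ) : ℂ) (T w (T ((ε * t : ℝ) : ℂ) f)) := by
    conv_lhs => rw [← hzeq]
    rw [hTsg _ memεt _ memwεt, hTsg _ memw _ memεt]
    rfl
  set L : ℝ := (eLpNorm (⇑f) 1 (volume.restrict Ω)).toReal with hL_def
  have hL0 : 0 ≤ L := ENNReal.toReal_nonneg
  set g : Lp ℂ 2 (volume.restrict Ω) := T w (T ((ε * t : ℝ) : ℂ) f) with hg_def
  -- step 1 : L¹ → L²
  have step1 : ‖T ((ε * t : ℝ) : ℂ) f‖ ≤ C * (ε * t) ^ α * L :=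
    hL1L2 (ε * t) hεt f hf
  -- step 2 : L² bound
  have step2 : ‖g‖ ≤ C * (C * (ε * t) ^ α * L) := by
    calc ‖g‖ ≤ ‖T w‖ * ‖T ((ε * t : ℝ) : ℂ) f‖ := (T w).le_opNorm _
      _ ≤ C * (C * (ε * t) ^ α * L) := by
          apply mul_le_mul (hL2 w ⟨memw.1, hwarg⟩) step1 (norm_nonneg _) hC.le
  -- step 3 : L² → L∞
  have step3 : eLpNorm (⇑(T ((ε * t : ℝ) : ℂ) g)) ⊤ (volume.restrict Ω) ≤
      ENNReal.ofReal (C * (ε * t) ^ α * ‖g‖) := hL2Linf (ε * t) hεt g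
  have hrpow : 0 < (ε * t) ^ α := Real.rpow_pos_of_pos hεt α
  have key : eLpNorm (⇑(T z f)) ⊤ (volume.restrict Ω) ≤
      ENNReal.ofReal (C * (ε * t) ^ α * (C * (C * (ε * t) ^ α * L))) := by
    rw [hdecomp]
    refine step3.trans (ENNReal.ofReal_le_ofReal ?_)
    apply mul_le_mul_of_nonneg_left step2 (by positivity)
  refine key.trans (le_of_eq ?_)
  have hmul : C * (ε * t) ^ α * (C * (C * (ε * t) ^ α * L)) =
      (C ^ 3 * ε ^ (-((N : ℝ) / (2 * s))) * t ^ (-((N : ℝ) / (2 * s)))) * L := by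
    have h1 : (ε * t) ^ α = ε ^ α * t ^ α := Real.mul_rpow hε0.le ht.le
    have h2 : ε ^ α * ε ^ α = ε ^ (-((N : ℝ) / (2 * s))) := by
      rw [← Real.rpow_add hε0]
      congr 1
      simp only [hα_def]
      field_simp
      ring
    have h3 : t ^ α * t ^ α = t ^ (-((N : ℝ) / (2 * s))) := by
      rw [← Real.rpow_add ht]
      congr 1
      simp only [hα_def]
      field_simp
      ring
    calc C * (ε * t) ^ α * (C * (C * (ε * t) ^ α * L))
        = C ^ 3 * ((ε ^ α * ε ^ α) * (t ^ α * t ^ α)) * L := by rw [h1]; ring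
      _ = _ := by rw [h2, h3]; ring
  rw [hmul, ENNReal.ofReal_mul (by positivity), hL_def,
    ENNReal.ofReal_toReal hf.eLpNorm_ne_top]
end
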